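/- Let N be a metric semidirected network with calibrating set E_c (edges outside E_c having length 0), satisfying: (1) Π_DTI d̄ ≠ 0, and (2) the average inheritance matrix Ā = Σ_T γ(T) A(T) is injective. Suppose the noiseless distance data satisfies δ^{(k)} = r_k A(T^{(k)}) b with gene tree frequencies matching probabilities, i.e., (1/K) Σ_k 1(T^{(k)} = T) = γ(T) for all T. Then the unique minimizer of Q_DTI(α̂, b̂) = ‖(I − Π_DTI)((1/K)Σ_k α̂_k δ^{(k)} − Ā b̂)‖² + λ Σ_k ‖Π_DTI(α̂_k δ^{(k)} − Ā b̂)‖² subject to z^T α̂ = 1 (with z ≻ 0, λ > 0) is (α*, b*) = (cα, cb), where α = (r_1^{-1},…,r_K^{-1}) and c = (z^T α)^{-1}. -/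

import Mathlib

open Matrix BigOperators

lemma sumMulVec_aux {α : Type*} {P E : ℕ} (s : Finset α) (M : α → Matrix (Fin P) (Fin E) ℝ)
    (x : Fin E → ℝ) : (∑ T ∈ s, M T) *ᵥ x = ∑ T ∈ s, M T *ᵥ x := by
  ext i
  simp only [Matrix.mulVec, dotProduct, Finset.sum_apply, Matrix.sum_apply,
    Finset.sum_mul]
  exact Finset.sum_comm

/-- Consistency of the composite criterion `Q_DTI` in the
noiseless case: under (1) `Π_DTI d̄ ≠ 0` and (2) injectivity of the average
inheritance matrix `Ā`, with noiseless data `δ⁽ᵏ⁾ = r_k A(T⁽ᵏ⁾) b` and gene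
tree frequencies matching the displayed tree probabilities, the unique
minimizer of `Q_DTI` subject to `zᵀα̂ = 1` is `(cα, cb)` with
`α = (r₁⁻¹,…,r_K⁻¹)` and `c = (zᵀα)⁻¹`. `Pr` is the orthogonal projection
(symmetric idempotent matrix) onto `V_DTI`. -/
theorem stmt_5 {K P E : ℕ} {ι : Type*} [Fintype ι] [DecidableEq ι] (hK : 0 < K)
    (A : ι → Matrix (Fin P) (Fin E) ℝ)
    (γ : ι → ℝ) (hγ : ∀ T, 0 ≤ γ T) (hγ1 : ∑ T, γ T = 1)
    (Abar : Matrix (Fin P) (Fin E) ℝ) (hAbar : Abar = ∑ T, γ T • A T)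
    (hAinj : Function.Injective Abar.mulVec)
    (b : Fin E → ℝ)
    (Pr : Matrix (Fin P) (Fin P) ℝ)
    (hidem : Pr * Pr = Pr) (hsym : Pr.transpose = Pr)
    (hrange : ∀ v : Fin P → ℝ,
      (∃ u, Pr.mulVec u = v) ↔ ∀ T T' : ι, v ᵥ* A T = v ᵥ* A T')
    (hproj : Pr.mulVec (Abar.mulVec b) ≠ 0)
    (t : Fin K → ι) (r : Fin K → ℝ) (hr : ∀ k, 0 < r k)
    (δ : Fin K → Fin P → ℝ)
    (hδ : ∀ k, δ k = r k • (A (t k)).mulVec b)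
    (hfreq : ∀ T, (∑ k, if t k = T then (1:ℝ) else 0) / K = γ T)
    (z : Fin K → ℝ) (hz : ∀ k, 0 < z k)
    (lam : ℝ) (hlam : 0 < lam)
    (Q : (Fin K → ℝ) → (Fin E → ℝ) → ℝ)
    (hQ : ∀ a bb, Q a bb =
      (((K : ℝ)⁻¹ • (∑ k, a k • δ k) - Abar.mulVec bb)
          - Pr.mulVec ((K : ℝ)⁻¹ • (∑ k, a k • δ k) - Abar.mulVec bb)) ⬝ᵥ
        (((K : ℝ)⁻¹ • (∑ k, a k • δ k) - Abar.mulVec bb)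
          - Pr.mulVec ((K : ℝ)⁻¹ • (∑ k, a k • δ k) - Abar.mulVec bb)) +
      lam * ∑ k,
        (Pr.mulVec (a k • δ k - Abar.mulVec bb)) ⬝ᵥ
          (Pr.mulVec (a k • δ k - Abar.mulVec bb)))
    (c : ℝ) (hc : c = (∑ k, z k / r k)⁻¹) :
    ∀ a bb, ((z ⬝ᵥ a = 1) ∧ ∀ a' bb', z ⬝ᵥ a' = 1 → Q a bb ≤ Q a' bb') ↔
      ((a = fun k => c / r k) ∧ bb = c • b) := by
  have hKR : (K:ℝ) ≠ 0 := Nat.cast_ne_zero.mpr hK.ne'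
  set k0 : Fin K := ⟨0, hK⟩ with hk0
  -- rows of Pr lie in the range of Pr
  have hPrA : ∀ T T' : ι, Pr * A T = Pr * A T' := by
    intro T T'
    ext i j
    have hv : ∃ u, Pr *ᵥ u = Pr i :=
      ⟨Pi.single i 1, by rw [Matrix.mulVec_single_one]; funext j; exact congrFun (congrFun hsym i) j⟩
    have h := congrFun ((hrange (Pr i)).mp hv T T') j
    simpa [Matrix.mul_apply, Matrix.vecMul, dotProduct] using h
  have hPrAbar : ∀ T : ι, Pr * A T = Pr * Abar := by
    intro T
    rw [hAbar, Matrix.mul_sum]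
    calc Pr * A T = ∑ T', γ T' • (Pr * A T) := by
          rw [← Finset.sum_smul, hγ1, one_smul]
      _ = ∑ T', γ T' • (Pr * A T') :=
          Finset.sum_congr rfl fun T' _ => by rw [hPrA T T']
      _ = ∑ T', Pr * (γ T' • A T') := by
          simp [Matrix.mul_smul]
  have hPrb : ∀ T : ι, Pr *ᵥ (A T *ᵥ b) = Pr *ᵥ (Abar *ᵥ b) := fun T => by
    rw [Matrix.mulVec_mulVec, Matrix.mulVec_mulVec, hPrAbar T]
  set w : Fin P → ℝ := Pr *ᵥ (Abar *ᵥ b) with hw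
  -- frequency identity
  have h1 : ∑ k, A (t k) *ᵥ b = (K:ℝ) • (Abar *ᵥ b) := by
    calc ∑ k, A (t k) *ᵥ b
        = ∑ k, ∑ T, (if t k = T then (1:ℝ) else 0) • (A T *ᵥ b) := by
          refine Finset.sum_congr rfl fun k _ => ?_
          simp [ite_smul]
      _ = ∑ T, ∑ k, (if t k = T then (1:ℝ) else 0) • (A T *ᵥ b) := Finset.sum_comm
      _ = ∑ T, (∑ k, if t k = T then (1:ℝ) else 0) • (A T *ᵥ b) := by
          refine Finset.sum_congr rfl fun T _ => ?_
          rw [Finset.sum_smul]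
      _ = ∑ T, ((K:ℝ) * γ T) • (A T *ᵥ b) := by
          refine Finset.sum_congr rfl fun T _ => ?_
          rw [← hfreq T]
          congr 1
          field_simp
      _ = (K:ℝ) • ∑ T, γ T • (A T *ᵥ b) := by
          rw [Finset.smul_sum]
          simp [smul_smul]
      _ = (K:ℝ) • (Abar *ᵥ b) := by
          rw [hAbar, sumMulVec_aux]
          simp [Matrix.smul_mulVec]
  have hgene : ∀ μ : ℝ, (K:ℝ)⁻¹ • (∑ k, μ • (A (t k) *ᵥ b)) = μ • (Abar *ᵥ b) := by
    intro μ
    rw [← Finset.smul_sum, h1, smul_comm μ, smul_smul, inv_mul_cancel₀ hKR, one_smul]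
  have hSz : 0 < ∑ k, z k / r k :=
    Finset.sum_pos (fun k _ => div_pos (hz k) (hr k)) ⟨k0, Finset.mem_univ _⟩
  have hcSz : c * ∑ k, z k / r k = 1 := by rw [hc]; exact inv_mul_cancel₀ hSz.ne'
  have hδ' : ∀ (μ : ℝ) (k : Fin K), (μ / r k) • δ k = μ • (A (t k) *ᵥ b) := by
    intro μ k
    rw [hδ k, smul_smul, div_mul_cancel₀ _ (hr k).ne']
  have hδ'' : ∀ (k : Fin K) (a : Fin K → ℝ), a k • δ k = (a k * r k) • (A (t k) *ᵥ b) := by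
    intro k a
    rw [hδ k, smul_smul]
  have hstar : z ⬝ᵥ (fun k => c / r k) = 1 := by
    have heq : z ⬝ᵥ (fun k => c / r k) = c * ∑ k, z k / r k := by
      simp only [dotProduct, Finset.mul_sum]
      exact Finset.sum_congr rfl fun k _ => by ring
    rw [heq, hcSz]
  -- nonnegativity
  have hdn : ∀ (v : Fin P → ℝ), 0 ≤ v ⬝ᵥ v := fun v =>
    Finset.sum_nonneg fun i _ => mul_self_nonneg (v i)
  have hQnn : ∀ a bb, 0 ≤ Q a bb := by
    intro a bb
    rw [hQ]
    exact add_nonneg (hdn _)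
      (mul_nonneg hlam.le (Finset.sum_nonneg fun k _ => hdn _))
  -- value at the candidate minimizer
  have hQzero : Q (fun k => c / r k) (c • b) = 0 := by
    rw [hQ]
    have hm : (K:ℝ)⁻¹ • (∑ k, (c / r k) • δ k) = Abar *ᵥ (c • b) := by
      simp only [hδ']
      rw [hgene c, Matrix.mulVec_smul]
    have hterm : ∀ k : Fin K, Pr *ᵥ ((c / r k) • δ k - Abar *ᵥ (c • b)) = 0 := by
      intro k
      rw [hδ' c k, Matrix.mulVec_smul, Matrix.mulVec_sub, Matrix.mulVec_smul,
        Matrix.mulVec_smul, hPrb (t k), sub_self]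
    rw [hm]
    simp [hterm]
  intro a bb
  constructor
  · rintro ⟨hcon, hmin⟩
    have hQ0 : Q a bb = 0 :=
      le_antisymm (by rw [← hQzero]; exact hmin _ _ hstar) (hQnn a bb)
    rw [hQ] at hQ0
    set v1 := ((K : ℝ)⁻¹ • (∑ k, a k • δ k) - Abar.mulVec bb)
          - Pr.mulVec ((K : ℝ)⁻¹ • (∑ k, a k • δ k) - Abar.mulVec bb) with hv1
    have hS0 : ∑ k, (Pr *ᵥ (a k • δ k - Abar *ᵥ bb)) ⬝ᵥ (Pr *ᵥ (a k • δ k - Abar *ᵥ bb)) = 0 := by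
      have h1' := hdn v1
      have h2' : 0 ≤ ∑ k, (Pr *ᵥ (a k • δ k - Abar *ᵥ bb)) ⬝ᵥ (Pr *ᵥ (a k • δ k - Abar *ᵥ bb)) :=
        Finset.sum_nonneg fun k _ => hdn _
      nlinarith
    have hT0 : v1 ⬝ᵥ v1 = 0 := by
      rw [hS0, mul_zero, add_zero] at hQ0
      exact hQ0
    have hkz : ∀ k : Fin K, Pr *ᵥ (a k • δ k - Abar *ᵥ bb) = 0 := by
      intro k
      have := (Finset.sum_eq_zero_iff_of_nonneg (fun k _ => hdn
        (Pr *ᵥ (a k • δ k - Abar *ᵥ bb)))).mp hS0 k (Finset.mem_univ k)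
      exact dotProduct_self_eq_zero.mp this
    -- each k gives (a k * r k) • w = Pr(Ā bb)
    have hkey : ∀ k : Fin K, (a k * r k) • w = Pr *ᵥ (Abar *ᵥ bb) := by
      intro k
      have h := hkz k
      rw [hδ'' k a, Matrix.mulVec_sub, Matrix.mulVec_smul, hPrb (t k), sub_eq_zero] at h
      exact h
    set μ := a k0 * r k0 with hμdef
    have hμ : ∀ k : Fin K, a k * r k = μ := by
      intro k
      have h : (a k * r k) • w = μ • w := by rw [hkey k, hμdef, hkey k0]
      obtain ⟨j, hj⟩ := Function.ne_iff.mp hproj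
      have := congrFun h j
      simp only [Pi.smul_apply, smul_eq_mul] at this
      exact mul_right_cancel₀ hj this
    have hak : ∀ k : Fin K, a k = μ / r k := fun k =>
      (eq_div_iff (hr k).ne').mpr (hμ k)
    -- Pr(Ā bb) = μ • w
    have hPrbb : Pr *ᵥ (Abar *ᵥ bb) = μ • w := by rw [← hkey k0, hμ k0]
    -- mean vector
    have hm : (K:ℝ)⁻¹ • (∑ k, a k • δ k) = μ • (Abar *ᵥ b) := by
      rw [show ∑ k, a k • δ k = ∑ k, μ • (A (t k) *ᵥ b) from
        Finset.sum_congr rfl fun k _ => by rw [hδ'' k a, hμ k]]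
      exact hgene μ
    -- residual is zero
    have hv : μ • (Abar *ᵥ b) - Abar *ᵥ bb = 0 := by
      have hPv : Pr *ᵥ (μ • (Abar *ᵥ b) - Abar *ᵥ bb) = 0 := by
        rw [Matrix.mulVec_sub, Matrix.mulVec_smul, hPrbb, ← hw, sub_self]
      have hv10 : v1 = 0 := dotProduct_self_eq_zero.mp hT0
      rw [hv1, hm, hPv, sub_zero] at hv10
      exact hv10
    have hbb : bb = μ • b := by
      apply hAinj
      rw [Matrix.mulVec_smul]
      exact (sub_eq_zero.mp hv).symm
    -- constraint determines μ = c
    have hμc : μ = c := by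
      have h1' : μ * ∑ k, z k / r k = 1 := by
        rw [← hcon]
        simp only [dotProduct, Finset.mul_sum]
        refine Finset.sum_congr rfl fun k _ => ?_
        rw [hak k]
        field_simp
      have h2' := hcSz
      have := hSz.ne'
      rw [hc]
      exact eq_inv_of_mul_eq_one_left h1'
    constructor
    · funext k; rw [hak k, hμc]
    · rw [hbb, hμc]
  · rintro ⟨ha, hbb⟩
    subst ha hbb
    exact ⟨hstar, fun a' bb' _ => by rw [hQzero]; exact hQnn a' bb'⟩
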